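/- Let t ≥ 4 be an integer and let G be a finite simple graph containing a copy of G_{t−1}(u; u_1, …, u_{t−2}) as a subgraph. Then the K_{2,t}-bootstrap closure Ĝ of G contains a copy of K_{t−1,t−1} as a subgraph. -/

import Mathlib

/-- `G` contains a copy of `H` as a subgraph. -/
def HasCopy {W V : Type*} (H : SimpleGraph W) (G : SimpleGraph V) : Prop :=
  ∃ f : W → V, Function.Injective f ∧ ∀ ⦃a b : W⦄, H.Adj a b → G.Adj (f a) (f b)

/-- Adding the edge `{x, y}` to `G` creates a new copy of `H` containing that edge. -/
def CreatesCopy {W V : Type*} (H : SimpleGraph W) (G : SimpleGraph V) (x y : V) : Prop :=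
  ∃ f : W → V, Function.Injective f ∧
    (∀ ⦃a b : W⦄, H.Adj a b →
      G.Adj (f a) (f b) ∨ (f a = x ∧ f b = y) ∨ (f a = y ∧ f b = x)) ∧
    ∃ a b : W, H.Adj a b ∧ ((f a = x ∧ f b = y) ∨ (f a = y ∧ f b = x))

/-- One step of the `H`-bootstrap process: add to `G` all non-edges whose addition
creates a new copy of `H` containing them. -/
def bootStep {W V : Type*} (H : SimpleGraph W) (G : SimpleGraph V) : SimpleGraph V where
  Adj x y := G.Adj x y ∨ (¬ G.Adj x y ∧ x ≠ y ∧ CreatesCopy H G x y)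
  symm := by
    constructor
    intro x y h
    rcases h with h | ⟨hn, hne, f, hf, hmap, a, b, hab, hor⟩
    · exact Or.inl h.symm
    · exact Or.inr ⟨fun h' => hn h'.symm, hne.symm, f, hf,
        fun a b hab => by have := hmap hab; tauto, a, b, hab, hor.symm⟩
  loopless := by
    constructor
    intro x h
    rcases h with h | ⟨_, hne, _⟩
    · exact G.loopless.irrefl x h
    · exact hne rfl

def bootSeq {W V : Type*} (H : SimpleGraph W) (G : SimpleGraph V) : ℕ → SimpleGraph V
  | 0 => G
  | n + 1 => bootStep H (bootSeq H G n)

/-- The `H`-bootstrap closure of `G`: the union of the iterated bootstrap steps. -/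
def bootClosure {W V : Type*} (H : SimpleGraph W) (G : SimpleGraph V) : SimpleGraph V :=
  ⨆ n, bootSeq H G n

/-- `G` percolates in the `H`-bootstrap process, i.e. its closure is complete. -/
def Percolates {W V : Type*} (H : SimpleGraph W) (G : SimpleGraph V) : Prop :=
  bootClosure H G = ⊤

abbrev GVert (r s : ℕ) := Unit ⊕ Fin s ⊕ Fin s × Fin r

def GRel (r s : ℕ) : GVert r s → GVert r s → Prop := fun a b =>
  match a, b with
  | Sum.inl _, Sum.inr (Sum.inr _) => True
  | Sum.inr (Sum.inl i), Sum.inr (Sum.inr p) => p.1 = i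
  | _, _ => False

/-- The graph `G_r(u; u_1, …, u_s)`: `s` copies of `K_{2,r}`, where `{u_i, u_i'}` is the
part of size 2 of the `i`-th copy, glued by identifying all `u_i'` to one vertex `u`.
Here `Sum.inl ()` is `u`, `Sum.inr (Sum.inl i)` is `u_i`, and `Sum.inr (Sum.inr (i, j))`
is the `j`-th vertex of the part of size `r` in the `i`-th copy. -/
def GStar (r s : ℕ) : SimpleGraph (GVert r s) := SimpleGraph.fromRel (GRel r s)

def htr (t : ℕ) : ℕ := (t - 1) / 2
def hts (t : ℕ) : ℕ := t - 1 - htr t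

abbrev HtV (t : ℕ) :=
  GVert (t - 1) (htr t) ⊕ GVert (hts t - 1) (hts t) ⊕ GVert (htr t - 1) (t - 2)

/-- For `r = ⌊(t-1)/2⌋`, `s = t - 1 - r`: the disjoint union of `G_{t-1}(u; u_1, …, u_r)`,
`G_{s-1}(v; v_1, …, v_s)` and `G_{r-1}(w; w_1, …, w_{t-2})`, joining `u` to
`v, v_1, …, v_s` and `v` to `w, w_1, …, w_{t-2}`. -/
def HtRel (t : ℕ) : HtV t → HtV t → Prop := fun a b =>
  match a, b with
  | Sum.inl x, Sum.inl y => GRel _ _ x y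
  | Sum.inr (Sum.inl x), Sum.inr (Sum.inl y) => GRel _ _ x y
  | Sum.inr (Sum.inr x), Sum.inr (Sum.inr y) => GRel _ _ x y
  | Sum.inl (Sum.inl _), Sum.inr (Sum.inl (Sum.inl _)) => True
  | Sum.inl (Sum.inl _), Sum.inr (Sum.inl (Sum.inr (Sum.inl _))) => True
  | Sum.inr (Sum.inl (Sum.inl _)), Sum.inr (Sum.inr (Sum.inl _)) => True
  | Sum.inr (Sum.inl (Sum.inl _)), Sum.inr (Sum.inr (Sum.inr (Sum.inl _))) => True
  | _, _ => False

/-- The graph `H_t`. -/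
def Ht (t : ℕ) : SimpleGraph (HtV t) := SimpleGraph.fromRel (HtRel t)

theorem stmt_9 {V : Type*} [Fintype V] (t : ℕ) (ht : 4 ≤ t) (G : SimpleGraph V)
    (h : HasCopy (GStar (t - 1) (t - 2)) G) :
    HasCopy (completeBipartiteGraph (Fin (t - 1)) (Fin (t - 1)))
      (bootClosure (completeBipartiteGraph (Fin 2) (Fin t)) G) := by
  obtain ⟨m, rfl⟩ : ∃ m, t = m + 4 := ⟨t - 4, by omega⟩
  have h' : HasCopy (GStar (m + 3) (m + 2)) G := h
  clear h
  show HasCopy (completeBipartiteGraph (Fin (m + 3)) (Fin (m + 3)))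
      (bootClosure (completeBipartiteGraph (Fin 2) (Fin (m + 4))) G)
  obtain ⟨f, finj, fadj⟩ := h'
  set H := completeBipartiteGraph (Fin 2) (Fin (m + 4)) with hH
  -- adjacency facts in G
  have hu : ∀ (i : Fin (m + 2)) (j : Fin (m + 3)),
      G.Adj (f (Sum.inl ())) (f (Sum.inr (Sum.inr (i, j)))) := by
    intro i j
    exact fadj ⟨by simp, Or.inl trivial⟩
  have hU : ∀ (i : Fin (m + 2)) (j : Fin (m + 3)),
      G.Adj (f (Sum.inr (Sum.inl i))) (f (Sum.inr (Sum.inr (i, j)))) := by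
    intro i j
    exact fadj ⟨by simp, Or.inl rfl⟩
  have hsub : bootStep H G ≤ bootClosure H G := le_iSup (bootSeq H G) 1
  -- the key step: all edges u_k -- x_{0,j} are in the first bootstrap step
  have hstep : ∀ (k : Fin (m + 2)) (j : Fin (m + 3)),
      (bootStep H G).Adj (f (Sum.inr (Sum.inl k))) (f (Sum.inr (Sum.inr (0, j)))) := by
    intro k j
    by_cases hA : G.Adj (f (Sum.inr (Sum.inl k))) (f (Sum.inr (Sum.inr (0, j))))
    · exact Or.inl hA
    · have hk0 : k ≠ 0 := by rintro rfl; exact hA (hU 0 j)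
      refine Or.inr ⟨hA, ?_, ?_⟩
      · intro e; exact absurd (finj e) (by simp)
      · -- CreatesCopy: K_{2,m+4} with parts {u, u_k} and X_k ∪ {x_{0,j}}
        refine ⟨f ∘ Sum.elim
            (fun a : Fin 2 => if a = 0 then Sum.inl () else Sum.inr (Sum.inl k))
            (Fin.lastCases (Sum.inr (Sum.inr (0, j)))
              (fun b : Fin (m + 3) => Sum.inr (Sum.inr (k, b)))), ?_, ?_, ?_⟩
        · apply finj.comp
          rintro (a | b) (a' | b') e
          · fin_cases a <;> fin_cases a' <;> simp_all
          · fin_cases a <;>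
              induction b' using Fin.lastCases <;> simp_all
          · fin_cases a' <;>
              induction b using Fin.lastCases <;> simp_all
          · induction b using Fin.lastCases <;>
              induction b' using Fin.lastCases <;>
              simp_all
        · rintro (a | b) (a' | b') hadj
          · simp [hH] at hadj
          · -- left-right edges
            fin_cases a
            · refine Or.inl ?_
              induction b' using Fin.lastCases with
              | last => simpa using hu 0 j
              | cast b'' => simpa using hu k b''
            · induction b' using Fin.lastCases with
              | last => exact Or.inr (Or.inl ⟨by simp, by simp⟩)
              | cast b'' => exact Or.inl (by simpa using hU k b'')
          · fin_cases a'
            · refine Or.inl ?_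
              induction b using Fin.lastCases with
              | last => simpa using (hu 0 j).symm
              | cast b'' => simpa using (hu k b'').symm
            · induction b using Fin.lastCases with
              | last => exact Or.inr (Or.inr ⟨by simp, by simp⟩)
              | cast b'' => exact Or.inl (by simpa using (hU k b'').symm)
          · simp [hH] at hadj
        · exact ⟨Sum.inl 1, Sum.inr (Fin.last (m + 3)), by simp [hH],
            Or.inl ⟨by simp, by simp⟩⟩
  -- assemble the K_{t-1,t-1}
  refine ⟨f ∘ Sum.elim
      (Fin.cases (Sum.inl ()) (fun k : Fin (m + 2) => Sum.inr (Sum.inl k)))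
      (fun j : Fin (m + 3) => Sum.inr (Sum.inr (0, j))), ?_, ?_⟩
  · apply finj.comp
    rintro (i | j) (i' | j') e
    · rcases Fin.eq_zero_or_eq_succ i with rfl | ⟨k, rfl⟩ <;>
        rcases Fin.eq_zero_or_eq_succ i' with rfl | ⟨k', rfl⟩ <;>
        simp_all
    · rcases Fin.eq_zero_or_eq_succ i with rfl | ⟨k, rfl⟩ <;> simp_all
    · rcases Fin.eq_zero_or_eq_succ i' with rfl | ⟨k', rfl⟩ <;> simp_all
    · simp_all
  · rintro (i | j) (i' | j') hadj
    · simp at hadj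
    · rcases Fin.eq_zero_or_eq_succ i with rfl | ⟨k, rfl⟩
      · exact hsub (Or.inl (by simpa using hu 0 j'))
      · exact hsub (by simpa using hstep k j')
    · rcases Fin.eq_zero_or_eq_succ i' with rfl | ⟨k, rfl⟩
      · exact hsub (Or.inl (by simpa using (hu 0 j).symm))
      · exact hsub (by simpa using (hstep k j).symm)
    · simp at hadj
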